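/- For any tree T of order at least 3, the Roman bondage number satisfies b_R(T) ≤ Δ(T). -/

import Mathlib

open SimpleGraph Finset

/-- A Roman dominating function: `f : V → ℕ` taking values in `{0,1,2}` such that
every vertex with value `0` has a neighbor with value `2`. -/
def IsRDF {V : Type*} (G : SimpleGraph V) (f : V → ℕ) : Prop :=
  (∀ v, f v ≤ 2) ∧ ∀ v, f v = 0 → ∃ u, G.Adj v u ∧ f u = 2

/-- The Roman domination number: minimum weight of a Roman dominating function. -/
noncomputable def romanDomNum {V : Type*} (G : SimpleGraph V) [Fintype V] : ℕ :=
  sInf {w | ∃ f : V → ℕ, IsRDF G f ∧ ∑ v, f v = w}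

/-- The Roman bondage number: minimum number of edges whose removal increases
the Roman domination number (`⊤` if no such edge set exists). -/
noncomputable def romanBondage {V : Type*} (G : SimpleGraph V) [Fintype V] : ℕ∞ :=
  sInf {k | ∃ B : Finset (Sym2 V), ↑B ⊆ G.edgeSet ∧ (B.card : ℕ∞) = k ∧
    romanDomNum (G.deleteEdges ↑B) > romanDomNum G}

/-- A dominating set: every vertex is in `S` or adjacent to a member of `S`. -/
def IsDomSet {V : Type*} (G : SimpleGraph V) (S : Set V) : Prop :=
  ∀ v, v ∈ S ∨ ∃ u ∈ S, G.Adj v u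

/-- The domination number: minimum size of a dominating set. -/
noncomputable def domNum {V : Type*} (G : SimpleGraph V) [Fintype V] : ℕ :=
  sInf {k | ∃ S : Finset V, IsDomSet G ↑S ∧ S.card = k}

/-- The bondage number: minimum number of edges whose removal increases
the domination number (`⊤` if no such edge set exists). -/
noncomputable def bondage {V : Type*} (G : SimpleGraph V) [Fintype V] : ℕ∞ :=
  sInf {k | ∃ B : Finset (Sym2 V), ↑B ⊆ G.edgeSet ∧ (B.card : ℕ∞) = k ∧
    domNum (G.deleteEdges ↑B) > domNum G}

section Aux

variable {V : Type*} [Fintype V] (T : SimpleGraph V)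

/-- The graph `T` with vertex `v` isolated. -/
def RBGv (v : V) : SimpleGraph V := T.deleteEdges (T.incidenceSet v)

/-- The component of `u` in `T` with `v` isolated. -/
def RBA (v u : V) : Set V := {w | (RBGv T v).Reachable u w}

/-- Minimum weight of a "partial RDF" supported on `S` and self-sufficient on `S`. -/
noncomputable def RBm (S : Set V) : ℕ :=
  sInf {w | ∃ f : V → ℕ, (∀ x, f x ≤ 2) ∧ (∀ x, x ∉ S → f x = 0) ∧
    (∀ x ∈ S, f x = 0 → ∃ y ∈ S, T.Adj x y ∧ f y = 2) ∧ ∑ x, f x = w}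

variable {T}

lemma RBm_mem (S : Set V) : ∃ f : V → ℕ, (∀ x, f x ≤ 2) ∧ (∀ x, x ∉ S → f x = 0) ∧
    (∀ x ∈ S, f x = 0 → ∃ y ∈ S, T.Adj x y ∧ f y = 2) ∧ ∑ x, f x = RBm T S := by
  have hne : {w | ∃ f : V → ℕ, (∀ x, f x ≤ 2) ∧ (∀ x, x ∉ S → f x = 0) ∧
      (∀ x ∈ S, f x = 0 → ∃ y ∈ S, T.Adj x y ∧ f y = 2) ∧ ∑ x, f x = w}.Nonempty := by
    refine ⟨∑ x, S.indicator 1 x, S.indicator 1, ?_, ?_, ?_, rfl⟩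
    · intro x
      by_cases hx : x ∈ S
      · simp [Set.indicator_of_mem hx]
      · simp [Set.indicator_of_notMem hx]
    · intro x hx; simp [Set.indicator_of_notMem hx]
    · intro x hx h0
      exfalso
      rw [Set.indicator_of_mem hx] at h0
      simp at h0
  exact Nat.sInf_mem hne

lemma romanDomNum_mem (G : SimpleGraph V) :
    ∃ f : V → ℕ, IsRDF G f ∧ ∑ v, f v = romanDomNum G := by
  have hne : {w | ∃ f : V → ℕ, IsRDF G f ∧ ∑ v, f v = w}.Nonempty :=
    ⟨∑ _x : V, 1, fun _ => 1, ⟨fun _ => by norm_num, fun v h => by simp at h⟩, rfl⟩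
  exact Nat.sInf_mem hne

/-- Bridge fact from acyclicity. -/
lemma RB_not_reach (hac : T.IsAcyclic) {u v : V} (h : T.Adj u v) :
    ¬ (T.deleteEdges {s(u,v)}).Reachable u v :=
  ((isAcyclic_iff_forall_adj_isBridge.mp hac) h)

lemma RBGv_le_del {u v : V} (h : T.Adj u v) :
    RBGv T v ≤ T.deleteEdges {s(u,v)} := by
  intro a b hab
  rw [RBGv, deleteEdges_adj] at hab
  rw [deleteEdges_adj]
  refine ⟨hab.1, ?_⟩
  intro he
  apply hab.2
  rw [he]
  exact (T.mk'_mem_incidenceSet_right_iff).mpr h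

/-- `v` is not in the component of a neighbor `u` after isolating `v`. -/
lemma RB_not_mem (hac : T.IsAcyclic) {u v : V} (h : T.Adj u v) :
    ¬ (RBGv T v).Reachable u v := fun hr =>
  RB_not_reach hac h (hr.mono (RBGv_le_del h))

lemma RB_step (hac : T.IsAcyclic) {u v : V} (huv : T.Adj u v) {x y : V}
    (hxy : T.Adj x y)
    (hx : (RBGv T v).Reachable u x ∨ (RBGv T u).Reachable v x) :
    (RBGv T v).Reachable u y ∨ (RBGv T u).Reachable v y := by
  rcases hx with hx | hx
  · by_cases hy : y = v
    · subst hy; exact Or.inr (Reachable.refl _)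
    · have hxv : x ≠ v := by
        rintro rfl; exact RB_not_mem hac huv hx
      left
      refine hx.trans (Adj.reachable ?_)
      rw [RBGv, deleteEdges_adj]
      refine ⟨hxy, ?_⟩
      intro he
      rcases (T.mk'_mem_incidenceSet_iff).mp he with ⟨_, h1 | h1⟩
      · exact hxv h1.symm
      · exact hy h1.symm
  · by_cases hy : y = u
    · subst hy; exact Or.inl (Reachable.refl _)
    · have hxu : x ≠ u := by
        rintro rfl; exact RB_not_mem hac huv.symm hx
      right
      refine hx.trans (Adj.reachable ?_)
      rw [RBGv, deleteEdges_adj]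
      refine ⟨hxy, ?_⟩
      intro he
      rcases (T.mk'_mem_incidenceSet_iff).mp he with ⟨_, h1 | h1⟩
      · exact hxu h1.symm
      · exact hy h1.symm

lemma RB_cover_walk (hac : T.IsAcyclic) {u v : V} (huv : T.Adj u v) :
    ∀ {x w : V} (_ : T.Walk x w),
      ((RBGv T v).Reachable u x ∨ (RBGv T u).Reachable v x) →
      ((RBGv T v).Reachable u w ∨ (RBGv T u).Reachable v w) := by
  intro x w p
  induction p with
  | nil => exact id
  | cons h q ih => intro hx; exact ih (RB_step hac huv h hx)

lemma RB_cover (hconn : T.Connected) (hac : T.IsAcyclic) {u v : V} (huv : T.Adj u v)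
    (w : V) : w ∈ RBA T v u ∨ w ∈ RBA T u v := by
  obtain ⟨p⟩ := hconn.preconnected u w
  exact RB_cover_walk hac huv p (Or.inl (Reachable.refl u))

lemma RB_sides_disjoint (hac : T.IsAcyclic) {u v : V} (huv : T.Adj u v) (w : V) :
    ¬ (w ∈ RBA T v u ∧ w ∈ RBA T u v) := by
  rintro ⟨h1, h2⟩
  have r1 : (T.deleteEdges {s(u,v)}).Reachable u w := h1.mono (RBGv_le_del huv)
  have r2 : (T.deleteEdges {s(u,v)}).Reachable v w := by
    have := h2.mono (RBGv_le_del (u := v) (v := u) huv.symm)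
    have heq : T.deleteEdges {s(v,u)} = T.deleteEdges {s(u,v)} := by
      rw [Sym2.eq_swap]
    rwa [heq] at this
  exact RB_not_reach hac huv (r1.trans r2.symm)

lemma RB_branches_disjoint (hac : T.IsAcyclic) {u u' v : V} (huv : T.Adj u v)
    (hu'v : T.Adj u' v) (hne : u ≠ u') (w : V) :
    ¬ (w ∈ RBA T v u ∧ w ∈ RBA T v u') := by
  rintro ⟨h1, h2⟩
  have r : (RBGv T v).Reachable u u' := h1.trans h2.symm
  have r1 : (T.deleteEdges {s(u,v)}).Reachable u u' := r.mono (RBGv_le_del huv)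
  have r2 : (T.deleteEdges {s(u,v)}).Adj u' v := by
    rw [deleteEdges_adj]
    refine ⟨hu'v, ?_⟩
    intro he
    rcases Sym2.eq_iff.mp (Set.mem_singleton_iff.mp he) with ⟨h1, -⟩ | ⟨h1, -⟩
    · exact hne h1.symm
    · exact T.irrefl (h1 ▸ hu'v)
  exact RB_not_reach hac huv (r1.trans r2.reachable)

/-- Lemma (a'): per-edge lower bound. -/
lemma RB_edge_bound (hconn : T.Connected) (hac : T.IsAcyclic) {u v : V}
    (huv : T.Adj u v) :
    romanDomNum T ≤ RBm T (RBA T u v) + RBm T (RBA T v u) := by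
  obtain ⟨g1, hg1le, hg1sup, hg1dom, hg1sum⟩ := RBm_mem (T := T) (RBA T u v)
  obtain ⟨g2, hg2le, hg2sup, hg2dom, hg2sum⟩ := RBm_mem (T := T) (RBA T v u)
  apply Nat.sInf_le
  refine ⟨fun x => g1 x + g2 x, ⟨?_, ?_⟩, ?_⟩
  · intro x
    show g1 x + g2 x ≤ 2
    rcases RB_cover hconn hac huv x with hx | hx
    · rw [hg1sup x (fun hx' => RB_sides_disjoint hac huv x ⟨hx, hx'⟩)]
      simpa using hg2le x
    · rw [hg2sup x (fun hx' => RB_sides_disjoint hac huv x ⟨hx', hx⟩)]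
      simpa using hg1le x
  · intro x hx0
    have hx0' : g1 x + g2 x = 0 := hx0
    have h1 : g1 x = 0 := by omega
    have h2 : g2 x = 0 := by omega
    rcases RB_cover hconn hac huv x with hx | hx
    · obtain ⟨y, hy, hadj, hy2⟩ := hg2dom x hx h2
      refine ⟨y, hadj, ?_⟩
      show g1 y + g2 y = 2
      rw [hg1sup y (fun hy' => RB_sides_disjoint hac huv y ⟨hy, hy'⟩), hy2]
    · obtain ⟨y, hy, hadj, hy2⟩ := hg1dom x hx h1
      refine ⟨y, hadj, ?_⟩
      show g1 y + g2 y = 2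
      rw [hg2sup y (fun hy' => RB_sides_disjoint hac huv y ⟨hy', hy⟩), hy2]
  · show ∑ x, (g1 x + g2 x) = _
    rw [Finset.sum_add_distrib, hg1sum, hg2sum]

/-- Lemma (b): per-vertex upper bound, assuming isolating `v` does not increase `γ_R`. -/
lemma RB_vertex_bound [DecidableRel T.Adj] (hac : T.IsAcyclic) (v : V)
    (hle : romanDomNum (RBGv T v) ≤ romanDomNum T) :
    1 + ∑ u ∈ T.neighborFinset v, RBm T (RBA T v u) ≤ romanDomNum T := by
  classical
  obtain ⟨f, ⟨hfle, hfdom⟩, hfsum⟩ := romanDomNum_mem (RBGv T v)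
  have hfv : 1 ≤ f v := by
    rcases Nat.eq_zero_or_pos (f v) with h0 | h
    · obtain ⟨y, hadj, -⟩ := hfdom v h0
      rw [RBGv, deleteEdges_adj] at hadj
      exact absurd ((T.mk'_mem_incidenceSet_iff).mpr ⟨hadj.1, Or.inl rfl⟩) hadj.2
    · exact h
  -- restriction bound for each neighbor
  have hrest : ∀ u ∈ T.neighborFinset v,
      RBm T (RBA T v u) ≤ ∑ x, if x ∈ RBA T v u then f x else 0 := by
    intro u hu
    have huv : T.Adj v u := (T.mem_neighborFinset v u).mp hu
    apply Nat.sInf_le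
    refine ⟨fun x => if x ∈ RBA T v u then f x else 0, ?_, ?_, ?_, rfl⟩
    · intro x
      show (if x ∈ RBA T v u then f x else 0) ≤ 2
      split
      · exact hfle x
      · omega
    · intro x hx
      show (if x ∈ RBA T v u then f x else 0) = 0
      simp [hx]
    · intro x hx h0
      have h0' : (if x ∈ RBA T v u then f x else 0) = 0 := h0
      rw [if_pos hx] at h0'
      obtain ⟨y, hadj, hy2⟩ := hfdom x h0'
      have hadjT : T.Adj x y := hadj.1
      have hyA : y ∈ RBA T v u := hx.trans hadj.reachable
      refine ⟨y, hyA, hadjT, ?_⟩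
      show (if y ∈ RBA T v u then f y else 0) = 2
      rw [if_pos hyA]; exact hy2
  have hkey : ∑ u ∈ T.neighborFinset v, (∑ x, if x ∈ RBA T v u then f x else 0)
      ≤ ∑ x ∈ Finset.univ.erase v, f x := by
    rw [Finset.sum_comm]
    have hpt : ∀ x ∈ Finset.univ,
        (∑ u ∈ T.neighborFinset v, if x ∈ RBA T v u then f x else 0)
        ≤ ∑ x' ∈ Finset.univ.erase v, if x' = x then f x else 0 := by
      intro x _
      by_cases hex : ∃ u ∈ T.neighborFinset v, x ∈ RBA T v u
      · obtain ⟨u₀, hu₀, hxu₀⟩ := hex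
        have hxv : x ≠ v := fun h =>
          RB_not_mem hac ((T.mem_neighborFinset v u₀).mp hu₀).symm (h ▸ hxu₀)
        have hL : (∑ u ∈ T.neighborFinset v, if x ∈ RBA T v u then f x else 0) = f x := by
          refine Finset.sum_eq_single_of_mem u₀ hu₀ ?_ |>.trans (if_pos hxu₀)
          intro u hu hne
          rw [if_neg]
          intro hxu
          exact RB_branches_disjoint hac ((T.mem_neighborFinset v u).mp hu).symm
            ((T.mem_neighborFinset v u₀).mp hu₀).symm hne x ⟨hxu, hxu₀⟩
        have hR : (∑ x' ∈ Finset.univ.erase v, if x' = x then f x else 0) = f x := by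
          rw [Finset.sum_ite_eq' (Finset.univ.erase v) x (fun _ => f x)]
          rw [if_pos (Finset.mem_erase.mpr ⟨hxv, Finset.mem_univ x⟩)]
        rw [hL, hR]
      · push_neg at hex
        have hL : (∑ u ∈ T.neighborFinset v, if x ∈ RBA T v u then f x else 0) = 0 := by
          apply Finset.sum_eq_zero
          intro u hu
          rw [if_neg (hex u hu)]
        rw [hL]
        exact Nat.zero_le _
    calc ∑ x ∈ Finset.univ, ∑ u ∈ T.neighborFinset v, (if x ∈ RBA T v u then f x else 0)
        ≤ ∑ x ∈ Finset.univ, ∑ x' ∈ Finset.univ.erase v, (if x' = x then f x else 0) :=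
          Finset.sum_le_sum hpt
      _ = ∑ x' ∈ Finset.univ.erase v, ∑ x ∈ Finset.univ, (if x' = x then f x else 0) :=
          Finset.sum_comm
      _ = ∑ x' ∈ Finset.univ.erase v, f x' := by
          apply Finset.sum_congr rfl
          intro x' _
          rw [Finset.sum_ite_eq (Finset.univ) x' f, if_pos (Finset.mem_univ x')]
  calc 1 + ∑ u ∈ T.neighborFinset v, RBm T (RBA T v u)
      ≤ f v + ∑ u ∈ T.neighborFinset v, (∑ x, if x ∈ RBA T v u then f x else 0) :=
        Nat.add_le_add hfv (Finset.sum_le_sum hrest)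
    _ ≤ f v + ∑ x ∈ Finset.univ.erase v, f x := Nat.add_le_add_left hkey _
    _ = ∑ x, f x := (Finset.add_sum_erase Finset.univ f (Finset.mem_univ v))
    _ = romanDomNum (RBGv T v) := hfsum
    _ ≤ romanDomNum T := hle

/-- Sum over darts equals the double neighbor sum. -/
lemma RB_dart_sum [DecidableRel T.Adj] (g : V → V → ℕ) :
    ∑ d : T.Dart, g d.fst d.snd = ∑ v : V, ∑ u ∈ T.neighborFinset v, g v u := by
  classical
  let e : T.Dart ≃ Σ v : V, {u // u ∈ T.neighborFinset v} :=
    { toFun := fun d => ⟨d.fst, d.snd, (T.mem_neighborFinset _ _).mpr d.adj⟩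
      invFun := fun p => ⟨(p.1, p.2.1), (T.mem_neighborFinset _ _).mp p.2.2⟩
      left_inv := fun d => rfl
      right_inv := fun p => rfl }
  rw [Fintype.sum_equiv e (fun d => g d.fst d.snd) (fun p => g p.1 p.2.1) (fun d => rfl)]
  rw [← Finset.univ_sigma_univ, Finset.sum_sigma]
  refine Finset.sum_congr rfl fun v _ => ?_
  show ∑ u : {u // u ∈ T.neighborFinset v}, g v ↑u = _
  exact Finset.sum_coe_sort (T.neighborFinset v) (fun u => g v u)

/-- There is a vertex of degree at least 2. -/
lemma RB_exists_deg2 [DecidableRel T.Adj] (hconn : T.Connected) (hac : T.IsAcyclic)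
    (hn : 3 ≤ Fintype.card V) : ∃ w : V, 2 ≤ T.degree w := by
  classical
  by_contra hcon
  push_neg at hcon
  have htree : T.IsTree := ⟨hconn, hac⟩
  have hcard := htree.card_edgeFinset
  have hsum := T.sum_degrees_eq_twice_card_edges
  have hle : ∑ v : V, T.degree v ≤ ∑ _v : V, 1 :=
    Finset.sum_le_sum fun v _ => Nat.lt_succ_iff.mp (hcon v)
  simp only [Finset.sum_const, Finset.card_univ, smul_eq_mul, mul_one] at hle
  omega

/-- `γ_R(T) < n` for a tree on at least 3 vertices. -/
lemma RB_gamma_lt [DecidableRel T.Adj] (hconn : T.Connected) (hac : T.IsAcyclic)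
    (hn : 3 ≤ Fintype.card V) : romanDomNum T + 1 ≤ Fintype.card V := by
  classical
  obtain ⟨w, hw⟩ := RB_exists_deg2 hconn hac hn
  rw [← T.card_neighborFinset_eq_degree] at hw
  obtain ⟨a, ha, b, hb, hab⟩ := Finset.one_lt_card.mp hw
  have haw : T.Adj w a := (T.mem_neighborFinset w a).mp ha
  have hbw : T.Adj w b := (T.mem_neighborFinset w b).mp hb
  have hwa : w ≠ a := fun h => T.irrefl (h ▸ haw)
  have hwb : w ≠ b := fun h => T.irrefl (h ▸ hbw)
  set f : V → ℕ := fun x => if x = a ∨ x = b then 0 else if x = w then 2 else 1 with hf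
  have hrdf : IsRDF T f := by
    constructor
    · intro x; simp only [hf]; split
      · omega
      · split <;> omega
    · intro x hx0
      refine ⟨w, ?_, ?_⟩
      · simp only [hf] at hx0
        by_cases hxab : x = a ∨ x = b
        · rcases hxab with rfl | rfl
          · exact haw.symm
          · exact hbw.symm
        · rw [if_neg hxab] at hx0
          split at hx0 <;> omega
      · show f w = 2
        have hnab : ¬(w = a ∨ w = b) := by tauto
        simp [hf, hnab]
  have hsf : ∑ x, f x = Fintype.card V - 1 := by
    have hs1 : ∑ x, f x = ∑ x ∈ (Finset.univ.erase a).erase b, f x := by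
      refine (Finset.sum_subset (Finset.subset_univ _) ?_).symm
      intro x _ hx
      simp only [Finset.mem_erase, Finset.mem_univ, and_true, not_and_or, not_not] at hx
      have : x = a ∨ x = b := by tauto
      simp only [hf, if_pos this]
    have hs2 : ∀ x ∈ (Finset.univ.erase a).erase b, f x = 1 + (if x = w then 1 else 0) := by
      intro x hx
      simp only [Finset.mem_erase, Finset.mem_univ, and_true] at hx
      have : ¬(x = a ∨ x = b) := by tauto
      simp only [hf, if_neg this]
      split <;> omega
    rw [hs1, Finset.sum_congr rfl hs2, Finset.sum_add_distrib, Finset.sum_const,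
      Finset.sum_ite_eq' _ w (fun _ => 1)]
    have hwmem : w ∈ (Finset.univ.erase a).erase b :=
      Finset.mem_erase.mpr ⟨hwb, Finset.mem_erase.mpr ⟨hwa, Finset.mem_univ w⟩⟩
    rw [if_pos hwmem]
    have hbmem : b ∈ Finset.univ.erase a :=
      Finset.mem_erase.mpr ⟨fun h => hab h.symm, Finset.mem_univ b⟩
    rw [Finset.card_erase_of_mem hbmem, Finset.card_erase_of_mem (Finset.mem_univ a)]
    simp only [Finset.card_univ, smul_eq_mul, mul_one]
    omega
  have hle : romanDomNum T ≤ Fintype.card V - 1 :=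
    hsf ▸ Nat.sInf_le ⟨f, hrdf, rfl⟩
  omega

end Aux

theorem roman_bondage_tree {V : Type*} [Fintype V]
    (T : SimpleGraph V) [DecidableRel T.Adj]
    (hconn : T.Connected) (hacyclic : T.IsAcyclic) (hn : 3 ≤ Fintype.card V) :
    romanBondage T ≤ (T.maxDegree : ℕ∞) := by
  classical
  by_cases hex : ∃ v : V, romanDomNum T < romanDomNum (RBGv T v)
  · obtain ⟨v, hv⟩ := hex
    have hmem : ((T.degree v : ℕ∞)) ∈ {k | ∃ B : Finset (Sym2 V), ↑B ⊆ T.edgeSet ∧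
        (B.card : ℕ∞) = k ∧ romanDomNum (T.deleteEdges ↑B) > romanDomNum T} := by
      refine ⟨T.incidenceFinset v, ?_, ?_, ?_⟩
      · intro e he
        rw [Finset.mem_coe, T.mem_incidenceFinset] at he
        exact T.incidenceSet_subset v he
      · rw [T.card_incidenceFinset_eq_degree]
      · have hset : (↑(T.incidenceFinset v) : Set (Sym2 V)) = T.incidenceSet v := by
          ext e
          rw [Finset.mem_coe, T.mem_incidenceFinset]
        rw [hset]
        exact hv
    calc romanBondage T ≤ (T.degree v : ℕ∞) := sInf_le hmem
      _ ≤ (T.maxDegree : ℕ∞) := by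
          exact_mod_cast T.degree_le_maxDegree v
  · exfalso
    push_neg at hex
    set γ := romanDomNum T with hγ
    set n := Fintype.card V with hnn
    obtain ⟨k, hk⟩ : ∃ k, n = k + 1 := ⟨n - 1, by omega⟩
    -- per-vertex bound
    have hv : ∀ v : V, 1 + ∑ u ∈ T.neighborFinset v, RBm T (RBA T v u) ≤ γ :=
      fun v => RB_vertex_bound hacyclic v (hex v)
    -- sum over all vertices
    have hsum : n + ∑ v : V, ∑ u ∈ T.neighborFinset v, RBm T (RBA T v u) ≤ n * γ := by
      calc n + ∑ v : V, ∑ u ∈ T.neighborFinset v, RBm T (RBA T v u)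
          = ∑ v : V, (1 + ∑ u ∈ T.neighborFinset v, RBm T (RBA T v u)) := by
            rw [Finset.sum_add_distrib, Finset.sum_const, Finset.card_univ, smul_eq_mul,
              mul_one]
        _ ≤ ∑ _v : V, γ := Finset.sum_le_sum (fun v _ => hv v)
        _ = n * γ := by rw [Finset.sum_const, Finset.card_univ, smul_eq_mul]
    -- dart reindexing
    have hdart : ∑ d : T.Dart, RBm T (RBA T d.fst d.snd)
        = ∑ v : V, ∑ u ∈ T.neighborFinset v, RBm T (RBA T v u) :=
      RB_dart_sum (fun v u => RBm T (RBA T v u))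
    -- per edge bound summed over edges
    have hcard : T.edgeFinset.card = k := by
      have := (SimpleGraph.IsTree.mk hconn hacyclic).card_edgeFinset
      omega
    have hfiber : k * γ ≤ ∑ d : T.Dart, RBm T (RBA T d.fst d.snd) := by
      have hsplit : ∑ e ∈ T.edgeFinset,
          ∑ d ∈ Finset.univ.filter (fun d : T.Dart => d.edge = e), RBm T (RBA T d.fst d.snd)
          = ∑ d : T.Dart, RBm T (RBA T d.fst d.snd) :=
        Finset.sum_fiberwise_of_maps_to (fun d _ => (T.mem_edgeFinset).mpr d.edge_mem) _
      have hper : ∀ e ∈ T.edgeFinset, γ ≤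
          ∑ d ∈ Finset.univ.filter (fun d : T.Dart => d.edge = e), RBm T (RBA T d.fst d.snd) := by
        intro e he
        induction e with
        | _ u v =>
          have huv : T.Adj u v := (T.mem_edgeFinset).mp he
          set d₁ : T.Dart := ⟨(u, v), huv⟩ with hd₁
          set d₂ : T.Dart := ⟨(v, u), huv.symm⟩ with hd₂
          have hne : d₁ ≠ d₂ := fun h =>
            T.ne_of_adj huv (congrArg (fun d : T.Dart => d.toProd.1) h)
          have hsub : ({d₁, d₂} : Finset T.Dart) ⊆
              Finset.univ.filter (fun d : T.Dart => d.edge = s(u, v)) := by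
            intro d hd
            rcases Finset.mem_insert.mp hd with rfl | hd
            · exact Finset.mem_filter.mpr ⟨Finset.mem_univ _, rfl⟩
            · rw [Finset.mem_singleton.mp hd]
              refine Finset.mem_filter.mpr ⟨Finset.mem_univ _, ?_⟩
              show s(v, u) = s(u, v)
              exact Sym2.eq_swap
          calc γ ≤ RBm T (RBA T u v) + RBm T (RBA T v u) :=
                RB_edge_bound hconn hacyclic huv
            _ = ∑ d ∈ ({d₁, d₂} : Finset T.Dart), RBm T (RBA T d.fst d.snd) := by
                rw [Finset.sum_pair hne]
            _ ≤ _ := Finset.sum_le_sum_of_subset hsub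
      calc k * γ = ∑ _e ∈ T.edgeFinset, γ := by
            rw [Finset.sum_const, hcard, smul_eq_mul]
        _ ≤ ∑ e ∈ T.edgeFinset,
              ∑ d ∈ Finset.univ.filter (fun d : T.Dart => d.edge = e),
                RBm T (RBA T d.fst d.snd) := Finset.sum_le_sum hper
        _ = _ := hsplit
    have hγle : γ + 1 ≤ n := RB_gamma_lt hconn hacyclic hn
    have hmain : n + k * γ ≤ n * γ := by
      rw [← hdart] at hsum
      exact le_trans (Nat.add_le_add_left hfiber n) hsum
    have hmul : n * γ = k * γ + γ := by rw [hk]; ring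
    rw [hmul] at hmain
    have hng : n ≤ γ := by omega
    omega
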